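/- arXiv:2503.08105 — 3 statements merged into one kernel-verified Lean document; each statement's English description precedes it below -/
import Mathlib

section
/- If h and g are holomorphic functions on a domain Ω ⊆ ℂ and the function f(z) = h(z) + conj(g(z)) has the property that f² is harmonic on Ω (i.e. satisfies ∂²(f²)/∂z∂z̄ = 0 on Ω), then either h is constant on Ω or g is constant on Ω. -/
open Complex ComplexConjugate Metric Set

noncomputable def wDz (f : ℂ → ℂ) (z : ℂ) : ℂ :=
  (fderiv ℝ f z 1 - Complex.I * fderiv ℝ f z Complex.I) / 2

noncomputable def wDzbar (f : ℂ → ℂ) (z : ℂ) : ℂ :=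
  (fderiv ℝ f z 1 + Complex.I * fderiv ℝ f z Complex.I) / 2

/-- A complex-valued function is harmonic on `Ω` iff its mixed Wirtinger
derivative `∂²/∂z∂z̄` vanishes on `Ω`. -/
def HarmonicOnC (f : ℂ → ℂ) (Ω : Set ℂ) : Prop :=
  ∀ z ∈ Ω, wDz (wDzbar f) z = 0

lemma hasFDerivAt_conj_comp {v : ℂ → ℂ} {v' z : ℂ} (hv : HasDerivAt v v' z) :
    HasFDerivAt (fun x => conj (v x))
      ((Complex.conjCLE.toContinuousLinearMap).comp
        (((1 : ℂ →L[ℂ] ℂ).smulRight v').restrictScalars ℝ)) z :=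
  Complex.conjCLE.toContinuousLinearMap.hasFDerivAt.comp z (hv.hasFDerivAt.restrictScalars ℝ)

lemma wDz_eq {f : ℂ → ℂ} {z a b : ℂ} (h1 : fderiv ℝ f z 1 = a + b)
    (hI : fderiv ℝ f z Complex.I = a * Complex.I - b * Complex.I) : wDz f z = a := by
  simp only [wDz, h1, hI]
  linear_combination (b - a)/2 * Complex.I_sq

lemma wDzbar_eq {f : ℂ → ℂ} {z a b : ℂ} (h1 : fderiv ℝ f z 1 = a + b)
    (hI : fderiv ℝ f z Complex.I = a * Complex.I - b * Complex.I) : wDzbar f z = b := by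
  simp only [wDzbar, h1, hI]
  linear_combination (a - b)/2 * Complex.I_sq

lemma fderiv_sq_apply {h g : ℂ → ℂ} {a b z : ℂ} (hh : HasDerivAt h a z)
    (hg : HasDerivAt g b z) (w : ℂ) :
    fderiv ℝ (fun x => (h x + conj (g x)) ^ 2) z w
      = 2 * (h z + conj (g z)) * (a * w + conj b * conj w) := by
  set D : ℂ →L[ℝ] ℂ := (((1 : ℂ →L[ℂ] ℂ).smulRight a).restrictScalars ℝ) +
        ((Complex.conjCLE.toContinuousLinearMap).comp
          (((1 : ℂ →L[ℂ] ℂ).smulRight b).restrictScalars ℝ)) with hD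
  have Hf : HasFDerivAt (fun x => h x + conj (g x)) D z :=
    (hh.hasFDerivAt.restrictScalars ℝ).add (hasFDerivAt_conj_comp hg)
  have HF : HasFDerivAt (fun x => (h x + conj (g x)) ^ 2)
      ((h z + conj (g z)) • D + (h z + conj (g z)) • D) z := by
    simpa only [sq, Pi.mul_def] using Hf.mul Hf
  rw [HF.fderiv, hD]
  simp [mul_comm, mul_add]
  ring

lemma fderiv_G_apply {h g q : ℂ → ℂ} {a b c z : ℂ} (hh : HasDerivAt h a z)
    (hg : HasDerivAt g b z) (hq : HasDerivAt q c z) (w : ℂ) :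
    fderiv ℝ (fun x => 2 * (h x + conj (g x)) * conj (q x)) z w
      = 2 * ((a * w + conj b * conj w) * conj (q z)
          + (h z + conj (g z)) * (conj c * conj w)) := by
  set D : ℂ →L[ℝ] ℂ := (((1 : ℂ →L[ℂ] ℂ).smulRight a).restrictScalars ℝ) +
        ((Complex.conjCLE.toContinuousLinearMap).comp
          (((1 : ℂ →L[ℂ] ℂ).smulRight b).restrictScalars ℝ)) with hD
  set E : ℂ →L[ℝ] ℂ := (Complex.conjCLE.toContinuousLinearMap).comp
          (((1 : ℂ →L[ℂ] ℂ).smulRight c).restrictScalars ℝ) with hE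
  have Hf : HasFDerivAt (fun x => h x + conj (g x)) D z :=
    (hh.hasFDerivAt.restrictScalars ℝ).add (hasFDerivAt_conj_comp hg)
  have Hq : HasFDerivAt (fun x => conj (q x)) E z := hasFDerivAt_conj_comp hq
  have HF : HasFDerivAt (fun x => 2 * (h x + conj (g x)) * conj (q x))
      ((2 * (h z + conj (g z))) • E + conj (q z) • ((2:ℂ) • D)) z := by
    have := (Hf.const_mul (2:ℂ)).mul Hq
    simpa [Pi.mul_def] using this
  rw [HF.fderiv, hD, hE]
  simp [mul_comm, mul_add]
  ring

lemma wDzbar_sq {h g : ℂ → ℂ} {a b z : ℂ} (hh : HasDerivAt h a z) (hg : HasDerivAt g b z) :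
    wDzbar (fun x => (h x + conj (g x)) ^ 2) z = 2 * (h z + conj (g z)) * conj b := by
  refine wDzbar_eq (a := 2 * (h z + conj (g z)) * a) ?_ ?_
  · rw [fderiv_sq_apply hh hg 1]; simp; ring
  · rw [fderiv_sq_apply hh hg Complex.I]; simp [Complex.conj_I]; ring

lemma wDz_G {h g q : ℂ → ℂ} {a b c z : ℂ} (hh : HasDerivAt h a z)
    (hg : HasDerivAt g b z) (hq : HasDerivAt q c z) :
    wDz (fun x => 2 * (h x + conj (g x)) * conj (q x)) z = 2 * (a * conj (q z)) := by
  refine wDz_eq (b := 2 * (conj b * conj (q z) + (h z + conj (g z)) * conj c)) ?_ ?_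
  · rw [fderiv_G_apply hh hg hq 1]; simp; ring
  · rw [fderiv_G_apply hh hg hq Complex.I]; simp [Complex.conj_I]; ring

lemma wDz_congr {f₁ f₂ : ℂ → ℂ} {z : ℂ} (hf : f₁ =ᶠ[nhds z] f₂) : wDz f₁ z = wDz f₂ z := by
  simp only [wDz, hf.fderiv_eq]

lemma const_of_deriv_zero {Ω : Set ℂ} (hop : IsOpen Ω) (hconn : IsConnected Ω)
    {u : ℂ → ℂ} (hu : DifferentiableOn ℂ u Ω) (h0 : ∀ z ∈ Ω, deriv u z = 0) :
    ∃ c : ℂ, ∀ z ∈ Ω, u z = c := by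
  obtain ⟨z₀, hz₀⟩ := hconn.nonempty
  refine ⟨u z₀, fun z hz => ?_⟩
  obtain ⟨r, hr, hball⟩ := Metric.isOpen_iff.1 hop z₀ hz₀
  have hloc : ∀ x ∈ ball z₀ r, u x = u z₀ := by
    intro x hx
    refine (convex_ball z₀ r).is_const_of_fderivWithin_eq_zero
      (hu.mono hball) (fun y hy => ?_) hx (mem_ball_self hr)
    rw [fderivWithin_of_isOpen isOpen_ball hy]
    refine ContinuousLinearMap.ext_ring ?_
    rw [fderiv_apply_one_eq_deriv]
    exact h0 y (hball hy)
  have hana : AnalyticOnNhd ℂ u Ω := hu.analyticOnNhd hop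
  have hconst : AnalyticOnNhd ℂ (fun _ => u z₀ : ℂ → ℂ) Ω := fun x _ => analyticAt_const
  exact hana.eqOn_of_preconnected_of_eventuallyEq hconst hconn.isPreconnected hz₀
    (Filter.eventuallyEq_of_mem (ball_mem_nhds z₀ hr) hloc) hz

theorem stmt0 (Ω : Set ℂ) (hne : Ω.Nonempty) (hop : IsOpen Ω) (hconn : IsConnected Ω)
    (h g : ℂ → ℂ) (hh : DifferentiableOn ℂ h Ω) (hg : DifferentiableOn ℂ g Ω)
    (hharm : HarmonicOnC (fun z => (h z + conj (g z)) ^ 2) Ω) :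
    (∃ c : ℂ, ∀ z ∈ Ω, h z = c) ∨ (∃ c : ℂ, ∀ z ∈ Ω, g z = c) := by
  have hana_g : AnalyticOnNhd ℂ g Ω := hg.analyticOnNhd hop
  have hana_h : AnalyticOnNhd ℂ h Ω := hh.analyticOnNhd hop
  have hdh : ∀ z ∈ Ω, HasDerivAt h (deriv h z) z := fun z hz =>
    (hana_h z hz).differentiableAt.hasDerivAt
  have hdg : ∀ z ∈ Ω, HasDerivAt g (deriv g z) z := fun z hz =>
    (hana_g z hz).differentiableAt.hasDerivAt
  have hdg2 : ∀ z ∈ Ω, HasDerivAt (deriv g) (deriv (deriv g) z) z := fun z hz =>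
    (hana_g.deriv z hz).differentiableAt.hasDerivAt
  have key : ∀ z ∈ Ω, deriv h z * conj (deriv g z) = 0 := by
    intro z hz
    have hEq : wDzbar (fun x => (h x + conj (g x)) ^ 2) =ᶠ[nhds z]
        fun x => 2 * (h x + conj (g x)) * conj (deriv g x) :=
      Filter.eventuallyEq_of_mem (hop.mem_nhds hz)
        (fun w hw => wDzbar_sq (hdh w hw) (hdg w hw))
    have h0 := hharm z hz
    rw [wDz_congr hEq, wDz_G (hdh z hz) (hdg z hz) (hdg2 z hz)] at h0
    exact (mul_eq_zero.1 h0).resolve_left two_ne_zero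
  by_cases hcase : ∀ z ∈ Ω, deriv g z = 0
  · exact Or.inr (const_of_deriv_zero hop hconn hg hcase)
  · push_neg at hcase
    obtain ⟨z₀, hz₀, hne0⟩ := hcase
    have h1 : ∀ᶠ w in nhds z₀, w ∈ Ω := hop.mem_nhds hz₀
    have h2 : ∀ᶠ w in nhds z₀, deriv g w ≠ 0 :=
      (hana_g.deriv z₀ hz₀).continuousAt.eventually_ne hne0
    have hev : deriv h =ᶠ[nhds z₀] 0 := by
      filter_upwards [h1, h2] with w hw hw2
      exact (mul_eq_zero.1 (key w hw)).resolve_right (by simpa using hw2)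
    have hzero := hana_h.deriv.eqOn_zero_of_preconnected_of_eventuallyEq_zero
      hconn.isPreconnected hz₀ hev
    exact Or.inl (const_of_deriv_zero hop hconn hh fun z hz => hzero hz)
end

section
/- There exist holomorphic functions h, g and a non-real constant α ∈ ℂ such that f = h + conj∘g and F = α·h − conj∘(α·g) have opposite dilatations (ω_f = −ω_F) but the product f·F is not harmonic; e.g. h(z) = z, g(z) = z², α = i. -/
open Complex ComplexConjugate Metric Set

noncomputable def CJ : ℂ →L[ℝ] ℂ := Complex.conjCLE.toContinuousLinearMap


lemma hasF_conj (z : ℂ) : HasFDerivAt (fun w : ℂ => conj w) CJ z :=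
  Complex.conjCLE.hasFDerivAt

lemma hasF_conj_mul_sq (c z : ℂ) :
    HasFDerivAt (fun w : ℂ => conj (c * w ^ 2))
      (CJ.comp (((1 : ℂ →L[ℂ] ℂ).smulRight (c * (2 * z))).restrictScalars ℝ)) z := by
  have h1 : HasFDerivAt (fun w : ℂ => c * w ^ 2)
      (((1 : ℂ →L[ℂ] ℂ).smulRight (c * (2 * z))).restrictScalars ℝ) z := by
    have := ((hasDerivAt_pow 2 z).const_mul c).hasFDerivAt
    have e : ((1 : ℂ →L[ℂ] ℂ).smulRight (c * (2 * z))) =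
        ContinuousLinearMap.toSpanSingleton ℂ (c * (((2 : ℕ) : ℂ) * z ^ (2 - 1))) := by
      ext; simp [mul_comm]
    rw [e]; exact this.restrictScalars ℝ
  exact (hasF_conj (c * z^2)).comp z h1

noncomputable def Lf (z : ℂ) : ℂ →L[ℝ] ℂ :=
  ContinuousLinearMap.id ℝ ℂ +
    CJ.comp (((1 : ℂ →L[ℂ] ℂ).smulRight (1 * (2 * z))).restrictScalars ℝ)

lemma hasF_f (z : ℂ) : HasFDerivAt (fun w : ℂ => w + conj (w ^ 2)) (Lf z) z := by
  have h2 : HasFDerivAt (fun w : ℂ => conj (w ^ 2))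
      (CJ.comp (((1 : ℂ →L[ℂ] ℂ).smulRight (1 * (2 * z))).restrictScalars ℝ)) z := by
    simpa using hasF_conj_mul_sq 1 z
  exact (hasFDerivAt_id z).add h2

noncomputable def M : ℂ →L[ℝ] ℂ := Complex.I • ContinuousLinearMap.id ℝ ℂ

noncomputable def LF (z : ℂ) : ℂ →L[ℝ] ℂ :=
  M - CJ.comp (((1 : ℂ →L[ℂ] ℂ).smulRight (Complex.I * (2 * z))).restrictScalars ℝ)

lemma hasF_F (z : ℂ) :
    HasFDerivAt (fun w : ℂ => Complex.I * w - conj (Complex.I * w ^ 2)) (LF z) z := by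
  have hm : HasFDerivAt (fun w : ℂ => Complex.I * w) M z := by
    have heq : (fun w : ℂ => Complex.I * w) = ⇑M := by ext w; simp [M, smul_eq_mul]
    rw [heq]; exact M.hasFDerivAt
  exact hm.sub (hasF_conj_mul_sq Complex.I z)

lemma step1 (z : ℂ) :
    wDzbar (fun w => (w + conj (w ^ 2)) * (Complex.I * w - conj (Complex.I * w ^ 2))) z
      = 4 * Complex.I * (z + conj (z ^ 2)) * conj z := by
  have hP : HasFDerivAt (fun w => (w + conj (w ^ 2)) * (Complex.I * w - conj (Complex.I * w ^ 2))) _ z :=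
    (hasF_f z).mul (hasF_F z)
  rw [wDzbar, hP.fderiv]
  simp [Lf, LF, M, CJ, ContinuousLinearMap.smul_apply, smul_eq_mul, map_mul, map_pow,
    Complex.conj_I]
  have h3 : Complex.I ^ 3 = -Complex.I := by
    rw [pow_succ, Complex.I_sq]; ring
  ring_nf
  rw [h3]
  simp [Complex.conj_ofNat]
  ring

lemma step2 :
    wDz (fun z => 4 * Complex.I * (z + conj (z ^ 2)) * conj z) 1 = 4 * Complex.I := by
  have hu : HasFDerivAt (fun z : ℂ => 4 * Complex.I * (z + conj (z ^ 2)) * conj z)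
      (((4 * Complex.I * ((1 : ℂ) + conj ((1 : ℂ) ^ 2))) • CJ +
        conj (1 : ℂ) • ((4 * Complex.I) • Lf 1))) 1 := by
    have := ((hasF_f 1).const_mul (4 * Complex.I)).mul (hasF_conj 1)
    exact this
  rw [wDz, hu.fderiv]
  simp [Lf, CJ, ContinuousLinearMap.smul_apply, smul_eq_mul, Complex.conj_I]
  ring_nf
  have h3 : Complex.I ^ 3 = -Complex.I := by rw [pow_succ, Complex.I_sq]; ring
  rw [h3]
  ring

theorem stmt8 :
    ∃ (h g : ℂ → ℂ) (α : ℂ),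
      Differentiable ℂ h ∧ Differentiable ℂ g ∧ α.im ≠ 0 ∧
      (∀ z : ℂ, deriv g z / deriv h z =
        -(deriv (fun w => -α * g w) z / deriv (fun w => α * h w) z)) ∧
      ¬ HarmonicOnC (fun z => (h z + conj (g z)) * (α * h z - conj (α * g z))) Set.univ := by
  refine ⟨fun z => z, fun z => z ^ 2, Complex.I, differentiable_id,
    fun z => (differentiableAt_id.pow 2 : DifferentiableAt ℂ _ z), by simp, ?_, ?_⟩
  · intro z
    have h1 : deriv (fun z : ℂ => z ^ 2) z = 2 * z := by
      simpa using deriv_pow 2 (x := z)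
    have h2 : deriv (fun z : ℂ => z) z = 1 := deriv_id z
    have h3 : deriv (fun w : ℂ => -Complex.I * w ^ 2) z = -Complex.I * (2 * z) := by
      rw [deriv_const_mul _ (differentiableAt_id.pow 2)]
      simpa using deriv_pow 2 (x := z)
    have h4 : deriv (fun w : ℂ => Complex.I * w) z = Complex.I := by
      rw [deriv_const_mul _ differentiableAt_id]
      simp
    rw [h1, h2, h3, h4]
    have hI : Complex.I ≠ 0 := Complex.I_ne_zero
    field_simp
  · intro H
    have h1 := H 1 (Set.mem_univ 1)
    have hPe : (fun z : ℂ => ((fun z : ℂ => z) z + conj ((fun z : ℂ => z ^ 2) z)) *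
        (Complex.I * (fun z : ℂ => z) z - conj (Complex.I * (fun z : ℂ => z ^ 2) z)))
        = (fun w : ℂ => (w + conj (w ^ 2)) * (Complex.I * w - conj (Complex.I * w ^ 2))) := rfl
    rw [hPe] at h1
    have he : wDzbar (fun w : ℂ => (w + conj (w ^ 2)) * (Complex.I * w - conj (Complex.I * w ^ 2)))
        = fun z => 4 * Complex.I * (z + conj (z ^ 2)) * conj z := funext step1
    rw [he, step2] at h1
    simpa [Complex.ext_iff] using h1
end

section
/- Let h, g, H, G be holomorphic on a domain Ω. The product (h + conj∘g)(H + conj∘G) is harmonic on Ω if and only if h'(z)·conj(G'(z)) + H'(z)·conj(g'(z)) = 0 for all z ∈ Ω. -/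
open Complex ComplexConjugate Metric Set

/-- The real-linear map `w ↦ a * w + b * conj w`. -/
noncomputable def RL (a b : ℂ) : ℂ →L[ℝ] ℂ :=
  a • (ContinuousLinearMap.id ℂ ℂ).restrictScalars ℝ +
    b • (Complex.conjCLE : ℂ ≃L[ℝ] ℂ).toContinuousLinearMap

lemma RL_apply (a b w : ℂ) : RL a b w = a * w + b * conj w := by
  simp [RL, Complex.conjCLE_apply, smul_eq_mul]

lemma hasFDerivAt_mixed {u v : ℂ → ℂ} {u' v' z : ℂ}
    (hu : HasDerivAt u u' z) (hv : HasDerivAt v v' z) :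
    HasFDerivAt (fun w => u w + conj (v w)) (RL u' (conj v')) z := by
  have h1 := hu.hasFDerivAt.restrictScalars ℝ
  have h2 : HasFDerivAt (fun w => conj (v w))
      ((Complex.conjCLE : ℂ ≃L[ℝ] ℂ).toContinuousLinearMap.comp
        (((ContinuousLinearMap.smulRight (1 : ℂ →L[ℂ] ℂ) v')).restrictScalars ℝ)) z :=
    (Complex.conjCLE.toContinuousLinearMap.hasFDerivAt).comp z
      (hv.hasFDerivAt.restrictScalars ℝ)
  have h3 : HasFDerivAt (fun w => u w + conj (v w)) _ z := h1.add h2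
  convert h3 using 1
  refine ContinuousLinearMap.ext fun w => ?_
  simp [RL_apply, Complex.conjCLE_apply, smul_eq_mul, mul_comm]

lemma wDz_eq_s16 {f : ℂ → ℂ} {L : ℂ →L[ℝ] ℂ} {z : ℂ} (hf : HasFDerivAt f L z) :
    wDz f z = (L 1 - Complex.I * L Complex.I) / 2 := by
  rw [wDz, hf.fderiv]

lemma wDzbar_eq_s16 {f : ℂ → ℂ} {L : ℂ →L[ℝ] ℂ} {z : ℂ} (hf : HasFDerivAt f L z) :
    wDzbar f z = (L 1 + Complex.I * L Complex.I) / 2 := by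
  rw [wDzbar, hf.fderiv]

lemma hasFDerivAt_prod_mixed {u1 v1 u2 v2 : ℂ → ℂ} {u1' v1' u2' v2' z : ℂ}
    (h1 : HasDerivAt u1 u1' z) (h2 : HasDerivAt v1 v1' z)
    (h3 : HasDerivAt u2 u2' z) (h4 : HasDerivAt v2 v2' z) :
    HasFDerivAt (fun w => (u1 w + conj (v1 w)) * (u2 w + conj (v2 w)))
      ((u1 z + conj (v1 z)) • RL u2' (conj v2') +
        (u2 z + conj (v2 z)) • RL u1' (conj v1')) z :=
  (hasFDerivAt_mixed h1 h2).mul (hasFDerivAt_mixed h3 h4)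

lemma step1_s16 {u1 v1 u2 v2 : ℂ → ℂ} {u1' v1' u2' v2' z : ℂ}
    (h1 : HasDerivAt u1 u1' z) (h2 : HasDerivAt v1 v1' z)
    (h3 : HasDerivAt u2 u2' z) (h4 : HasDerivAt v2 v2' z) :
    wDzbar (fun w => (u1 w + conj (v1 w)) * (u2 w + conj (v2 w))) z
      = (u1 z + conj (v1 z)) * conj v2' + (u2 z + conj (v2 z)) * conj v1' := by
  rw [wDzbar_eq_s16 (hasFDerivAt_prod_mixed h1 h2 h3 h4)]
  simp only [ContinuousLinearMap.add_apply, ContinuousLinearMap.smul_apply, RL_apply,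
    smul_eq_mul, map_one, Complex.conj_I, mul_one]
  ring_nf
  simp [Complex.I_sq]
  ring

lemma step2_s16 {u1 v1 u2 v2 u3 v3 u4 v4 : ℂ → ℂ}
    {u1' v1' u2' v2' u3' v3' u4' v4' z : ℂ}
    (h1 : HasDerivAt u1 u1' z) (h2 : HasDerivAt v1 v1' z)
    (h3 : HasDerivAt u2 u2' z) (h4 : HasDerivAt v2 v2' z)
    (h5 : HasDerivAt u3 u3' z) (h6 : HasDerivAt v3 v3' z)
    (h7 : HasDerivAt u4 u4' z) (h8 : HasDerivAt v4 v4' z) :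
    wDz (fun w => (u1 w + conj (v1 w)) * (u2 w + conj (v2 w)) +
        (u3 w + conj (v3 w)) * (u4 w + conj (v4 w))) z
      = ((u1 z + conj (v1 z)) * u2' + (u2 z + conj (v2 z)) * u1')
        + ((u3 z + conj (v3 z)) * u4' + (u4 z + conj (v4 z)) * u3') := by
  erw [wDz_eq_s16 ((hasFDerivAt_prod_mixed h1 h2 h3 h4).add
      (hasFDerivAt_prod_mixed h5 h6 h7 h8))]
  simp only [ContinuousLinearMap.add_apply, ContinuousLinearMap.smul_apply, RL_apply,
    smul_eq_mul, map_one, Complex.conj_I, mul_one]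
  ring_nf
  simp [Complex.I_sq]
  ring

theorem stmt16 (Ω : Set ℂ) (hop : IsOpen Ω) (hconn : IsConnected Ω)
    (h g H G : ℂ → ℂ) (hh : DifferentiableOn ℂ h Ω) (hg : DifferentiableOn ℂ g Ω)
    (hH : DifferentiableOn ℂ H Ω) (hG : DifferentiableOn ℂ G Ω) :
    HarmonicOnC (fun z => (h z + conj (g z)) * (H z + conj (G z))) Ω ↔
      ∀ z ∈ Ω, deriv h z * conj (deriv G z) + deriv H z * conj (deriv g z) = 0 := by
  -- holomorphic derivative data
  have hh' : ∀ z ∈ Ω, HasDerivAt h (deriv h z) z := fun z hz =>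
    ((hh.differentiableAt (hop.mem_nhds hz)).hasDerivAt)
  have hg' : ∀ z ∈ Ω, HasDerivAt g (deriv g z) z := fun z hz =>
    ((hg.differentiableAt (hop.mem_nhds hz)).hasDerivAt)
  have hH' : ∀ z ∈ Ω, HasDerivAt H (deriv H z) z := fun z hz =>
    ((hH.differentiableAt (hop.mem_nhds hz)).hasDerivAt)
  have hG' : ∀ z ∈ Ω, HasDerivAt G (deriv G z) z := fun z hz =>
    ((hG.differentiableAt (hop.mem_nhds hz)).hasDerivAt)
  have hg'' : ∀ z ∈ Ω, HasDerivAt (deriv g) (deriv (deriv g) z) z := fun z hz =>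
    (((hg.analyticOnNhd hop).deriv z hz).differentiableAt).hasDerivAt
  have hG'' : ∀ z ∈ Ω, HasDerivAt (deriv G) (deriv (deriv G) z) z := fun z hz =>
    (((hG.analyticOnNhd hop).deriv z hz).differentiableAt).hasDerivAt
  set φ : ℂ → ℂ := fun w =>
    ((fun _ : ℂ => (0 : ℂ)) w + conj (deriv g w)) * (H w + conj (G w)) +
      (h w + conj (g w)) * ((fun _ : ℂ => (0 : ℂ)) w + conj (deriv G w)) with hφ
  have key : ∀ z ∈ Ω, wDz (wDzbar
      (fun z => (h z + conj (g z)) * (H z + conj (G z)))) z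
      = deriv h z * conj (deriv G z) + deriv H z * conj (deriv g z) := by
    intro z hz
    have heq : Set.EqOn (wDzbar (fun z => (h z + conj (g z)) * (H z + conj (G z)))) φ Ω := by
      intro w hw
      rw [step1_s16 (hh' w hw) (hg' w hw) (hH' w hw) (hG' w hw)]
      simp [hφ]
      ring
    have hev : wDzbar (fun z => (h z + conj (g z)) * (H z + conj (G z))) =ᶠ[nhds z] φ :=
      Filter.eventuallyEq_of_mem (hop.mem_nhds hz) heq
    have hfd : fderiv ℝ (wDzbar (fun z => (h z + conj (g z)) * (H z + conj (G z)))) z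
        = fderiv ℝ φ z := hev.fderiv_eq
    have : wDz (wDzbar (fun z => (h z + conj (g z)) * (H z + conj (G z)))) z = wDz φ z := by
      simp [wDz, hfd]
    rw [this, hφ]
    rw [step2_s16 (hasDerivAt_const z (0 : ℂ)) (hg'' z hz) (hH' z hz) (hG' z hz)
      (hh' z hz) (hg' z hz) (hasDerivAt_const z (0 : ℂ)) (hG'' z hz)]
    ring
  constructor
  · intro hHar z hz
    rw [← key z hz]
    exact hHar z hz
  · exact fun hid z hz => (key z hz).trans (hid z hz)
end
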